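/- Let p1 = [1:0:0], p2 = [0:1:0], p3 = [0:0:1] in P^2 and t5 ∈ C*. The conic xz - xy - t5*yz = 0 is irreducible, passes through p1, p2, p3, has tangent line y = z at p1, and (in the second infinitesimal neighborhood) passes through the point of standard coordinates (p1, 1, t5); it is the unique such conic. -/

import Mathlib

open MvPolynomial

/-- The conic `xz - xy - t·yz = 0` (variables `X 0 = x`, `X 1 = y`, `X 2 = z`). -/
noncomputable def conic8 (t : ℂ) : MvPolynomial (Fin 3) ℂ :=
  X 0 * X 2 - X 0 * X 1 - C t * X 1 * X 2

/-- Local equation of the curve `g = 0` in the affine chart `x = 1` with coordinates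
`(y,z)`. -/
noncomputable def localEq (g : MvPolynomial (Fin 3) ℂ) (y z : ℂ) : ℂ :=
  eval ![1, y, z] g

/-- The curve `g = 0` passes through the point with standard coordinates `(p₁, 1, t)`,
where `p₁ = [1:0:0]`: the composite of the two blow-ups
`(y,z) = (y₁, y₁z₁)`, `z₁ = w + 1`, `(y₁, w) = (y₂, y₂w₂)` pulls back the local equation
with exceptional factor exactly `y₂²`, and the resulting strict transform vanishes at
`(y₂, w₂) = (0, t)`. -/
def PassesInf8 (g : MvPolynomial (Fin 3) ℂ) (t : ℂ) : Prop :=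
  ∃ h : MvPolynomial (Fin 2) ℂ,
    (∀ y₂ w₂ : ℂ, localEq g y₂ (y₂ * (y₂ * w₂ + 1)) = y₂ ^ 2 * eval ![y₂, w₂] h) ∧
    eval ![0, t] h = 0

/-- The curve `g = 0` is smooth at the point with representative `v`, with tangent line
`y = z` there. -/
def TangentYeqZ (g : MvPolynomial (Fin 3) ℂ) (v : Fin 3 → ℂ) : Prop :=
  ∀ w : Fin 3 → ℂ, (∑ i, eval v (pderiv i g) * w i) = 0 ↔ w 1 = w 2

/-! ### Auxiliary machinery -/

/-- The exponent multiset `x^a y^b z^c` as a `Finsupp`. -/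
noncomputable def M3 (a b c : ℕ) : Fin 3 →₀ ℕ :=
  Finsupp.single 0 a + Finsupp.single 1 b + Finsupp.single 2 c

lemma deg3 (m : Fin 3 →₀ ℕ) : m.degree = m 0 + m 1 + m 2 := by
  rw [Finsupp.degree_apply, Finset.sum_subset (Finset.subset_univ m.support)
    (by intro i _ h; simpa using h), Fin.sum_univ_three]

lemma fin3_eq (m : Fin 3 →₀ ℕ) (a b c : ℕ) (h0 : m 0 = a) (h1 : m 1 = b) (h2 : m 2 = c) :
    m = M3 a b c := by
  ext i
  fin_cases i <;> simp [M3, Finsupp.single_apply, h0, h1, h2, Fin.ext_iff]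

lemma M3_degree (a b c : ℕ) : (M3 a b c).degree = a + b + c := by
  rw [deg3]; simp [M3, Finsupp.single_apply]

lemma monomial_M3 (a b c : ℕ) (r : ℂ) :
    monomial (M3 a b c) r = C r * X 0 ^ a * X 1 ^ b * X 2 ^ c := by
  rw [M3, X_pow_eq_monomial, X_pow_eq_monomial, X_pow_eq_monomial, mul_assoc, monomial_mul,
    mul_assoc, monomial_mul, C_mul_monomial]
  congr 1
  · abel
  · ring

lemma quad_cases (m : Fin 3 →₀ ℕ) (h : m.degree = 2) :
    m = M3 2 0 0 ∨ m = M3 0 2 0 ∨ m = M3 0 0 2 ∨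
    m = M3 1 1 0 ∨ m = M3 1 0 1 ∨ m = M3 0 1 1 := by
  rw [deg3] at h
  have : (m 0 = 2 ∧ m 1 = 0 ∧ m 2 = 0) ∨ (m 0 = 0 ∧ m 1 = 2 ∧ m 2 = 0) ∨
      (m 0 = 0 ∧ m 1 = 0 ∧ m 2 = 2) ∨ (m 0 = 1 ∧ m 1 = 1 ∧ m 2 = 0) ∨
      (m 0 = 1 ∧ m 1 = 0 ∧ m 2 = 1) ∨ (m 0 = 0 ∧ m 1 = 1 ∧ m 2 = 1) := by omega
  rcases this with ⟨h0,h1,h2⟩|⟨h0,h1,h2⟩|⟨h0,h1,h2⟩|⟨h0,h1,h2⟩|⟨h0,h1,h2⟩|⟨h0,h1,h2⟩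
  · exact Or.inl (fin3_eq m _ _ _ h0 h1 h2)
  · exact Or.inr <| Or.inl (fin3_eq m _ _ _ h0 h1 h2)
  · exact Or.inr <| Or.inr <| Or.inl (fin3_eq m _ _ _ h0 h1 h2)
  · exact Or.inr <| Or.inr <| Or.inr <| Or.inl (fin3_eq m _ _ _ h0 h1 h2)
  · exact Or.inr <| Or.inr <| Or.inr <| Or.inr <| Or.inl (fin3_eq m _ _ _ h0 h1 h2)
  · exact Or.inr <| Or.inr <| Or.inr <| Or.inr <| Or.inr (fin3_eq m _ _ _ h0 h1 h2)

lemma lin_cases (m : Fin 3 →₀ ℕ) (h : m.degree ≤ 1) :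
    m = M3 0 0 0 ∨ m = M3 1 0 0 ∨ m = M3 0 1 0 ∨ m = M3 0 0 1 := by
  rw [deg3] at h
  have : (m 0 = 0 ∧ m 1 = 0 ∧ m 2 = 0) ∨ (m 0 = 1 ∧ m 1 = 0 ∧ m 2 = 0) ∨
      (m 0 = 0 ∧ m 1 = 1 ∧ m 2 = 0) ∨ (m 0 = 0 ∧ m 1 = 0 ∧ m 2 = 1) := by omega
  rcases this with ⟨h0,h1,h2⟩|⟨h0,h1,h2⟩|⟨h0,h1,h2⟩|⟨h0,h1,h2⟩
  · exact Or.inl (fin3_eq m _ _ _ h0 h1 h2)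
  · exact Or.inr <| Or.inl (fin3_eq m _ _ _ h0 h1 h2)
  · exact Or.inr <| Or.inr <| Or.inl (fin3_eq m _ _ _ h0 h1 h2)
  · exact Or.inr <| Or.inr <| Or.inr (fin3_eq m _ _ _ h0 h1 h2)

lemma M3_inj {a b c a' b' c' : ℕ} (hne : (a,b,c) ≠ (a',b',c')) : M3 a b c ≠ M3 a' b' c' := by
  intro he
  apply hne
  have h0 : (M3 a b c) 0 = (M3 a' b' c') 0 := by rw [he]
  have h1 : (M3 a b c) 1 = (M3 a' b' c') 1 := by rw [he]
  have h2 : (M3 a b c) 2 = (M3 a' b' c') 2 := by rw [he]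
  simp [M3, Finsupp.single_apply, Fin.ext_iff] at h0 h1 h2
  simp [h0, h1, h2]

set_option linter.unreachableTactic false in
set_option linter.unusedTactic false in
lemma quad_decomp (g : MvPolynomial (Fin 3) ℂ) (hg : g.IsHomogeneous 2) :
    g = monomial (M3 2 0 0) (coeff (M3 2 0 0) g) + monomial (M3 0 2 0) (coeff (M3 0 2 0) g)
      + monomial (M3 0 0 2) (coeff (M3 0 0 2) g) + monomial (M3 1 1 0) (coeff (M3 1 1 0) g)
      + monomial (M3 1 0 1) (coeff (M3 1 0 1) g) + monomial (M3 0 1 1) (coeff (M3 0 1 1) g) := by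
  ext m
  simp only [coeff_add, coeff_monomial]
  by_cases h1 : m = M3 2 0 0
  · subst h1; simp [M3_inj]; try exact fun he => absurd he (M3_inj (by decide))
  by_cases h2 : m = M3 0 2 0
  · subst h2; simp [M3_inj]; try exact fun he => absurd he (M3_inj (by decide))
  by_cases h3 : m = M3 0 0 2
  · subst h3; simp [M3_inj]; try exact fun he => absurd he (M3_inj (by decide))
  by_cases h4 : m = M3 1 1 0
  · subst h4; simp [M3_inj]; try exact fun he => absurd he (M3_inj (by decide))
  by_cases h5 : m = M3 1 0 1
  · subst h5; simp [M3_inj]; try exact fun he => absurd he (M3_inj (by decide))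
  by_cases h6 : m = M3 0 1 1
  · subst h6; simp [M3_inj]; try exact fun he => absurd he (M3_inj (by decide))
  rw [if_neg (Ne.symm h1), if_neg (Ne.symm h2), if_neg (Ne.symm h3), if_neg (Ne.symm h4),
    if_neg (Ne.symm h5), if_neg (Ne.symm h6)]
  by_contra hc
  have := hg.coeff_eq_zero (d := m) ?_
  · simp_all
  · intro hdeg
    rcases quad_cases m hdeg with h|h|h|h|h|h <;> simp_all

set_option linter.unreachableTactic false in
set_option linter.unusedTactic false in
lemma lin_decomp (p : MvPolynomial (Fin 3) ℂ) (hp : p.totalDegree ≤ 1) :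
    p = monomial (M3 0 0 0) (coeff (M3 0 0 0) p) + monomial (M3 1 0 0) (coeff (M3 1 0 0) p)
      + monomial (M3 0 1 0) (coeff (M3 0 1 0) p) + monomial (M3 0 0 1) (coeff (M3 0 0 1) p) := by
  ext m
  simp only [coeff_add, coeff_monomial]
  by_cases h1 : m = M3 0 0 0
  · subst h1; simp [M3_inj]; try exact fun he => absurd he (M3_inj (by decide))
  by_cases h2 : m = M3 1 0 0
  · subst h2; simp [M3_inj]; try exact fun he => absurd he (M3_inj (by decide))
  by_cases h3 : m = M3 0 1 0
  · subst h3; simp [M3_inj]; try exact fun he => absurd he (M3_inj (by decide))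
  by_cases h4 : m = M3 0 0 1
  · subst h4; simp [M3_inj]; try exact fun he => absurd he (M3_inj (by decide))
  rw [if_neg (Ne.symm h1), if_neg (Ne.symm h2), if_neg (Ne.symm h3), if_neg (Ne.symm h4)]
  by_contra hc
  have hdeg : m.degree ≤ 1 := by
    rw [Finsupp.degree]
    exact le_trans (le_totalDegree (by simpa using hc)) hp
  rcases lin_cases m hdeg with h|h|h|h <;> simp_all

lemma degree_sum_eq (m : Fin 3 →₀ ℕ) : (m.sum fun _ e => e) = m.degree := rfl

lemma hc_top_ne (p : MvPolynomial (Fin 3) ℂ) (hp : p ≠ 0) :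
    homogeneousComponent p.totalDegree p ≠ 0 := by
  obtain ⟨m, hm, hdeg⟩ := Finset.exists_mem_eq_sup p.support
    (support_nonempty.2 hp) fun s => s.sum fun _ e => e
  intro hzero
  have h1 : coeff m (homogeneousComponent p.totalDegree p) = coeff m p := by
    rw [coeff_homogeneousComponent, if_pos]
    rw [← degree_sum_eq, ← hdeg]; rfl
  rw [hzero] at h1
  exact (MvPolynomial.mem_support_iff.1 hm) (by simpa using h1.symm)

lemma coeff_le_deg (p : MvPolynomial (Fin 3) ℂ) (m : Fin 3 →₀ ℕ)
    (h : p.totalDegree < m.degree) : coeff m p = 0 := by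
  apply coeff_eq_zero_of_totalDegree_lt
  rwa [← Finsupp.degree_apply]

lemma hc_top_mul (p q : MvPolynomial (Fin 3) ℂ) :
    homogeneousComponent (p.totalDegree + q.totalDegree) (p * q) =
      homogeneousComponent p.totalDegree p * homogeneousComponent q.totalDegree q := by
  set a := p.totalDegree
  set b := q.totalDegree
  ext m
  rw [coeff_homogeneousComponent, coeff_mul, coeff_mul]
  have key : ∀ u v : Fin 3 →₀ ℕ, u + v = m →
      coeff u (homogeneousComponent a p) * coeff v (homogeneousComponent b q) =
      (if m.degree = a + b then coeff u p * coeff v q else 0) := by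
    intro u v huv
    have hdadd : u.degree + v.degree = m.degree := by
      rw [← huv]; simp [deg3, Finsupp.add_apply]; ring
    rw [coeff_homogeneousComponent, coeff_homogeneousComponent]
    by_cases hu : u.degree = a
    · by_cases hv : v.degree = b
      · rw [if_pos hu, if_pos hv, if_pos (by omega)]
      · rw [if_neg hv, mul_zero]
        by_cases hm : m.degree = a + b
        · rw [if_pos hm]
          have : b < v.degree := by omega
          rw [coeff_le_deg q v this, mul_zero]
        · rw [if_neg hm]
    · rw [if_neg hu, zero_mul]
      by_cases hm : m.degree = a + b
      · rw [if_pos hm]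
        by_cases hua : u.degree ≤ a
        · have : b < v.degree := by omega
          rw [coeff_le_deg q v this, mul_zero]
        · rw [coeff_le_deg p u (by omega), zero_mul]
      · rw [if_neg hm]
  by_cases hm : m.degree = a + b
  · rw [if_pos hm]
    apply Finset.sum_congr rfl
    intro x hx
    rw [key x.1 x.2 (Finset.HasAntidiagonal.mem_antidiagonal.1 hx), if_pos hm]
  · rw [if_neg hm]
    rw [Finset.sum_congr rfl fun x hx => by
      rw [key x.1 x.2 (Finset.HasAntidiagonal.mem_antidiagonal.1 hx), if_neg hm]]
    simp

lemma coeff_M3_zero (p : MvPolynomial (Fin 3) ℂ) (a b c : ℕ)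
    (h : p.totalDegree < a + b + c) : coeff (M3 a b c) p = 0 := by
  apply coeff_eq_zero_of_totalDegree_lt
  have : ∑ i ∈ (M3 a b c).support, (M3 a b c) i = (M3 a b c).degree := rfl
  rw [this, M3_degree]
  exact h

lemma lin_decomp' (p : MvPolynomial (Fin 3) ℂ) (hp : p.totalDegree ≤ 1) :
    p = C (coeff (M3 0 0 0) p) + C (coeff (M3 1 0 0) p) * X 0
      + C (coeff (M3 0 1 0) p) * X 1 + C (coeff (M3 0 0 1) p) * X 2 := by
  conv_lhs => rw [lin_decomp p hp]
  rw [monomial_M3, monomial_M3, monomial_M3, monomial_M3]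
  ring

lemma conic8_ne_zero (t : ℂ) : conic8 t ≠ 0 := fun h => by
  have := congrArg (eval ![1, 0, 1]) h
  simp [conic8] at this

lemma conic8_hom (t : ℂ) : (conic8 t).IsHomogeneous 2 := by
  have h1 : ((X 0 * X 2 : MvPolynomial (Fin 3) ℂ)).IsHomogeneous 2 :=
    (isHomogeneous_X _ _).mul (isHomogeneous_X _ _)
  have h2 : ((X 0 * X 1 : MvPolynomial (Fin 3) ℂ)).IsHomogeneous 2 :=
    (isHomogeneous_X _ _).mul (isHomogeneous_X _ _)
  have h3 : ((C t * X 1 * X 2 : MvPolynomial (Fin 3) ℂ)).IsHomogeneous 2 := by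
    have := (((isHomogeneous_X ℂ (1 : Fin 3)).mul (isHomogeneous_X ℂ (2 : Fin 3))).C_mul t)
    rw [show C t * X 1 * X 2 = C t * (X 1 * X 2 : MvPolynomial (Fin 3) ℂ) by ring]
    exact this
  exact (h1.sub h2).sub h3

lemma unit_of_deg0 (p : MvPolynomial (Fin 3) ℂ) (hp0 : p ≠ 0) (h : p.totalDegree = 0) :
    IsUnit p := by
  have hp' := lin_decomp' p (by omega)
  rw [coeff_M3_zero p 1 0 0 (by omega), coeff_M3_zero p 0 1 0 (by omega),
    coeff_M3_zero p 0 0 1 (by omega)] at hp'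
  simp only [map_zero, zero_mul, add_zero] at hp'
  have hc : coeff (M3 0 0 0) p ≠ 0 := fun hc => hp0 (by rw [hp', hc, map_zero])
  rw [hp']
  exact IsUnit.of_mul_eq_one (C (coeff (M3 0 0 0) p)⁻¹)
    (by rw [← C_mul, mul_inv_cancel₀ hc, C_1])

lemma conic8_irred (t : ℂ) (ht : t ≠ 0) : Irreducible (conic8 t) := by
  constructor
  · rintro ⟨u, hu⟩
    have h1 := congrArg (eval ![0, 0, 0]) u.val_inv
    rw [hu] at h1
    simp [conic8] at h1
  · intro p q hpq
    by_contra hcon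
    push_neg at hcon
    obtain ⟨hpu, hqu⟩ := hcon
    have hp0 : p ≠ 0 := fun h => conic8_ne_zero t (by rw [hpq, h, zero_mul])
    have hq0 : q ≠ 0 := fun h => conic8_ne_zero t (by rw [hpq, h, mul_zero])
    have hdeg2 : (conic8 t).totalDegree = 2 := (conic8_hom t).totalDegree (conic8_ne_zero t)
    have hdegle : p.totalDegree + q.totalDegree ≤ 2 := by
      by_contra hgt
      push_neg at hgt
      have h0 : homogeneousComponent (p.totalDegree + q.totalDegree) (conic8 t) = 0 :=
        homogeneousComponent_eq_zero _ (conic8 t) (by rw [hdeg2]; exact hgt)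
      rw [hpq, hc_top_mul] at h0
      exact mul_ne_zero (hc_top_ne p hp0) (hc_top_ne q hq0) h0
    have hdp : p.totalDegree ≠ 0 := fun h => hpu (unit_of_deg0 p hp0 h)
    have hdq : q.totalDegree ≠ 0 := fun h => hqu (unit_of_deg0 q hq0 h)
    have hp' := lin_decomp' p (by omega)
    have hq' := lin_decomp' q (by omega)
    set a0 := coeff (M3 0 0 0) p; set a1 := coeff (M3 1 0 0) p
    set a2 := coeff (M3 0 1 0) p; set a3 := coeff (M3 0 0 1) p
    set b0 := coeff (M3 0 0 0) q; set b1 := coeff (M3 1 0 0) q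
    set b2 := coeff (M3 0 1 0) q; set b3 := coeff (M3 0 0 1) q
    have E : ∀ x y z : ℂ, (a0 + a1*x + a2*y + a3*z) * (b0 + b1*x + b2*y + b3*z)
        = x*z - x*y - t*y*z := by
      intro x y z
      have := congrArg (eval ![x, y, z]) hpq
      rw [hp', hq'] at this
      simpa [conic8] using this.symm
    have e00 : a0*b0 = 0 := by linear_combination E 0 0 0
    have e11 : a1*b1 = 0 := by linear_combination (E 1 0 0 + E (-1) 0 0 - 2 * E 0 0 0)/2
    have e22 : a2*b2 = 0 := by linear_combination (E 0 1 0 + E 0 (-1) 0 - 2 * E 0 0 0)/2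
    have e33 : a3*b3 = 0 := by linear_combination (E 0 0 1 + E 0 0 (-1) - 2 * E 0 0 0)/2
    have e01 : a0*b1 + a1*b0 = 0 := by linear_combination (E 1 0 0 - E (-1) 0 0)/2
    have e02 : a0*b2 + a2*b0 = 0 := by linear_combination (E 0 1 0 - E 0 (-1) 0)/2
    have e03 : a0*b3 + a3*b0 = 0 := by linear_combination (E 0 0 1 - E 0 0 (-1))/2
    have exy : a1*b2 + a2*b1 = -1 := by
      linear_combination E 1 1 0 - E 0 0 0 - e01 - e02 - e11 - e22
    have exz : a1*b3 + a3*b1 = 1 := by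
      linear_combination E 1 0 1 - E 0 0 0 - e01 - e03 - e11 - e33
    have eyz : a2*b3 + a3*b2 = -t := by
      linear_combination E 0 1 1 - E 0 0 0 - e02 - e03 - e22 - e33
    have hab0 : a0 = 0 ∧ b0 = 0 := by
      rcases mul_eq_zero.1 e00 with h | h
      · refine ⟨h, ?_⟩
        by_contra hb0
        have ha1 : a1 = 0 := by
          have := e01; rw [h] at this; simp at this
          exact this.resolve_right hb0
        have ha2 : a2 = 0 := by
          have := e02; rw [h] at this; simp at this
          exact this.resolve_right hb0
        rw [ha1, ha2] at exy; simp at exy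
      · refine ⟨?_, h⟩
        by_contra ha0
        have hb1 : b1 = 0 := by
          have := e01; rw [h] at this; simp at this
          exact this.resolve_left ha0
        have hb2 : b2 = 0 := by
          have := e02; rw [h] at this; simp at this
          exact this.resolve_left ha0
        rw [hb1, hb2] at exy; simp at exy
    obtain ⟨ha0, hb0⟩ := hab0
    rcases mul_eq_zero.1 e11 with h1 | h1
    · have hxy : a2*b1 = -1 := by linear_combination exy - b2*h1
      have hxz : a3*b1 = 1 := by linear_combination exz - b3*h1
      have ha2 : a2 ≠ 0 := fun h => one_ne_zero (α := ℂ) (by linear_combination hxy - b1*h)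
      have ha3 : a3 ≠ 0 := fun h => one_ne_zero (α := ℂ) (by linear_combination -hxz + b1*h)
      have hb2 : b2 = 0 := (mul_eq_zero.1 e22).resolve_left ha2
      have hb3 : b3 = 0 := (mul_eq_zero.1 e33).resolve_left ha3
      exact ht (by linear_combination eyz - a2*hb3 - a3*hb2)
    · have hxy : a1*b2 = -1 := by linear_combination exy - a2*h1
      have hxz : a1*b3 = 1 := by linear_combination exz - a3*h1
      have hb2 : b2 ≠ 0 := fun h => one_ne_zero (α := ℂ) (by linear_combination hxy - a1*h)
      have hb3 : b3 ≠ 0 := fun h => one_ne_zero (α := ℂ) (by linear_combination -hxz + a1*h)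
      have ha2 : a2 = 0 := (mul_eq_zero.1 e22).resolve_right hb2
      have ha3 : a3 = 0 := (mul_eq_zero.1 e33).resolve_right hb3
      exact ht (by linear_combination eyz - b3*ha2 - b2*ha3)

lemma conic8_uniq (t : ℂ) (ht : t ≠ 0) (g : MvPolynomial (Fin 3) ℂ) (hg : g.IsHomogeneous 2)
    (hg0 : g ≠ 0) (h1 : eval ![1, 0, 0] g = 0) (h2 : eval ![0, 1, 0] g = 0)
    (h3 : eval ![0, 0, 1] g = 0) (htan : TangentYeqZ g ![1, 0, 0]) (hinf : PassesInf8 g t) :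
    ∃ c : ℂ, c ≠ 0 ∧ g = c • conic8 t := by
  have hgd := quad_decomp g hg
  rw [monomial_M3, monomial_M3, monomial_M3, monomial_M3, monomial_M3, monomial_M3] at hgd
  set A := coeff (M3 2 0 0) g
  set B := coeff (M3 0 2 0) g
  set D := coeff (M3 0 0 2) g
  set a := coeff (M3 1 1 0) g
  set b := coeff (M3 1 0 1) g
  set c := coeff (M3 0 1 1) g
  simp only [pow_zero, pow_one, pow_two, mul_one, one_mul] at hgd
  rw [hgd] at h1 h2 h3
  simp at h1 h2 h3
  rw [h1, h2, h3] at hgd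
  simp only [map_zero, zero_mul, add_zero, zero_add] at hgd
  have htan' : ∀ w : Fin 3 → ℂ, (a * w 1 + b * w 2 = 0 ↔ w 1 = w 2) := by
    intro w
    have := htan w
    rw [hgd] at this
    rw [Fin.sum_univ_three] at this
    simp [pderiv_mul, pderiv_X] at this
    convert this using 2
  have hba : b = -a := by
    have := (htan' ![0, 1, 1]).2 (by rfl)
    simp at this
    linear_combination this
  have ha : a ≠ 0 := by
    intro h
    have := (htan' ![0, 1, 0]).1 (by simp [h])
    norm_num at this
    exact one_ne_zero this
  have hloc : ∀ y z : ℂ, localEq g y z = a * y + b * z + c * (y * z) := by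
    intro y z
    rw [localEq, hgd]
    simp
    ring
  obtain ⟨h, hh, h0⟩ := hinf
  set e : MvPolynomial (Fin 2) ℂ := C c * X 0 * X 1 - C a * X 1 + C c with he
  have hXk : (X 0 ^ 2 * (h - e) : MvPolynomial (Fin 2) ℂ) = 0 := by
    apply MvPolynomial.funext
    intro v
    have hv : ![v 0, v 1] = v := by funext i; fin_cases i <;> rfl
    have h5 := hh (v 0) (v 1)
    rw [hloc, hv] at h5
    simp only [he, map_mul, map_sub, map_add, eval_X, eval_C, map_pow, map_zero]
    linear_combination -h5 + (v 0 + v 0 ^ 2 * v 1) * hba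
  have hk : h = e := by
    have := (mul_eq_zero.1 hXk).resolve_left (pow_ne_zero _ (MvPolynomial.X_ne_zero 0))
    exact sub_eq_zero.1 this
  rw [hk] at h0
  simp [he] at h0
  have hc : c = a * t := by linear_combination h0
  refine ⟨-a, neg_ne_zero.2 ha, ?_⟩
  rw [hgd, conic8, MvPolynomial.smul_eq_C_mul, hba, hc, map_neg, map_mul]
  ring

/-- For `t ∈ ℂ*` the conic `xz - xy - t·yz = 0` is irreducible, passes through
`p₁ = [1:0:0]`, `p₂ = [0:1:0]`, `p₃ = [0:0:1]`, has tangent line `y = z` at `p₁`, passes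
through the second-order infinitely near point with standard coordinates `(p₁, 1, t)`,
and is the unique conic with these properties (up to a nonzero scalar). -/
theorem stmt8 (t : ℂ) (ht : t ≠ 0) :
    (conic8 t).IsHomogeneous 2 ∧
    Irreducible (conic8 t) ∧
    eval ![1, 0, 0] (conic8 t) = 0 ∧
    eval ![0, 1, 0] (conic8 t) = 0 ∧
    eval ![0, 0, 1] (conic8 t) = 0 ∧
    TangentYeqZ (conic8 t) ![1, 0, 0] ∧
    PassesInf8 (conic8 t) t ∧
    ∀ g : MvPolynomial (Fin 3) ℂ, g.IsHomogeneous 2 → g ≠ 0 →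
      eval ![1, 0, 0] g = 0 → eval ![0, 1, 0] g = 0 → eval ![0, 0, 1] g = 0 →
      TangentYeqZ g ![1, 0, 0] → PassesInf8 g t →
      ∃ c : ℂ, c ≠ 0 ∧ g = c • conic8 t := by
  refine ⟨conic8_hom t, conic8_irred t ht, by simp [conic8], by simp [conic8], by simp [conic8],
    ?_, ?_, fun g hg hg0 h1 h2 h3 htan hinf => conic8_uniq t ht g hg hg0 h1 h2 h3 htan hinf⟩
  · intro w
    simp only [conic8, Fin.sum_univ_three]
    simp [pderiv_X, pderiv_mul]
    constructor
    · intro h; linear_combination -h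
    · intro h; linear_combination -h
  · refine ⟨X 1 - C t * X 0 * X 1 - C t, fun y w => ?_, by simp⟩
    simp [localEq, conic8]
    ring
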